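/- Let Π be a group, Δ a normal subgroup of Π, and I a subgroup of Δ such that the normalizer of I in Δ equals I. Let D be a subgroup of Π such that D normalizes I, D ∩ Δ = I, and every element of Π can be written as a product d·δ with d ∈ D and δ ∈ Δ. Then the normalizer of I in Π equals D. -/

import Mathlib

/-- Let `Δ` be a normal subgroup of a group `Π`, and `I ≤ Δ` a subgroup which is
normally terminal in `Δ` (i.e. the normalizer of `I` in `Δ` is `I`).  If `D` is a
subgroup of `Π` normalizing `I` with `D ⊓ Δ = I` and such that every element of
`Π` is a product `d * δ` with `d ∈ D`, `δ ∈ Δ`, then the normalizer of `I` in `Π`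
equals `D`. -/
theorem normalizer_eq_of_normallyTerminal_in_normal
    {P : Type*} [Group P] (Δ D I : Subgroup P) [Δ.Normal]
    (hIΔ : I ≤ Δ)
    (hterm : Subgroup.normalizer ((I.subgroupOf Δ : Subgroup Δ) : Set Δ) = I.subgroupOf Δ)
    (hDnorm : D ≤ Subgroup.normalizer (I : Set P))
    (hDΔ : D ⊓ Δ = I)
    (hgen : ∀ p : P, ∃ d ∈ D, ∃ δ ∈ Δ, p = d * δ) :
    Subgroup.normalizer (I : Set P) = D := by
  apply le_antisymm _ hDnorm
  intro p hp
  obtain ⟨d, hd, δ, hδ, rfl⟩ := hgen p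
  have hδn : δ ∈ Subgroup.normalizer (I : Set P) := by
    have : d⁻¹ * (d * δ) ∈ Subgroup.normalizer (I : Set P) :=
      mul_mem (inv_mem (hDnorm hd)) hp
    simpa using this
  have hδI : δ ∈ I := by
    have : (⟨δ, hδ⟩ : Δ) ∈ Subgroup.normalizer ((I.subgroupOf Δ : Subgroup Δ) : Set Δ) := by
      intro y
      simp only [SetLike.mem_coe, Subgroup.mem_subgroupOf]
      exact hδn y
    rw [hterm] at this
    simpa [Subgroup.mem_subgroupOf] using this
  have : δ ∈ D ⊓ Δ := hDΔ.symm ▸ hδI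
  exact mul_mem hd this.1
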